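/- Let n ≥ 3 and u ≥ 1 be integers. Let n_k, n_{k+1}, ℓ_k, ℓ_{k+1} be positive integers such that n_k > 2^u, 2^{ℓ_k − 1}·n_k ≤ 2^{n+1} − 3, 2^{ℓ_{k+1} − 1}·n_{k+1} ≤ 2^{n+1} − 3, and 1 ≤ 2^{ℓ_k}·n_k − n_{k+1} ≤ 2^{n+1} − 3. Then at least one of the following holds: (i) ℓ_k ≤ n − u; (ii) ℓ_k + ℓ_{k+1} ≤ n + 1. (This is the arithmetic content of the lemma on consecutive geometric runs of the support of a solution whose support has exactly as many jumps as its weight: n_k and n_{k+1} are the initial terms of two consecutive runs, ℓ_k and ℓ_{k+1} their lengths, and 2^{ℓ_k} n_k − n_{k+1} is the corresponding jump, which lies in D = {odd i with 1 ≤ i ≤ 2^{n+1}−3}.) -/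

import Mathlib

/-- Arithmetic content of the lemma on two consecutive geometric runs of the support
of a solution whose support has exactly as many jumps as its weight: `n_k, n_{k+1}` are
the initial terms of two consecutive runs, `ℓ_k, ℓ_{k+1}` their lengths, and
`2^{ℓ_k}·n_k − n_{k+1}` is the corresponding jump, which lies in
`D = {odd i : 1 ≤ i ≤ 2^{n+1} − 3}`.  If `n_k > 2^u` then either `ℓ_k ≤ n − u` or
`ℓ_k + ℓ_{k+1} ≤ n + 1`. -/
theorem consecutive_runs_length_bound
    (n u nk nk' lk lk' : ℕ) (hn : 3 ≤ n) (hu : 1 ≤ u)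
    (hnk : 0 < nk) (hnk' : 0 < nk') (hlk : 0 < lk) (hlk' : 0 < lk')
    (hbig : 2 ^ u < nk)
    (hrun : 2 ^ (lk - 1) * nk ≤ 2 ^ (n + 1) - 3)
    (hrun' : 2 ^ (lk' - 1) * nk' ≤ 2 ^ (n + 1) - 3)
    (hjump_pos : 1 ≤ 2 ^ lk * nk - nk')
    (hjump_le : 2 ^ lk * nk - nk' ≤ 2 ^ (n + 1) - 3) :
    lk ≤ n - u ∨ lk + lk' ≤ n + 1 := by
  by_cases h : lk ≤ n - u
  · exact Or.inl h
  · push_neg at h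
    have hA3 : 3 ≤ 2 ^ (n + 1) := by
      calc (3 : ℕ) ≤ 2 ^ 2 := by norm_num
        _ ≤ 2 ^ (n + 1) := Nat.pow_le_pow_right (by norm_num) (by omega)
    have hpos : 0 < 2 ^ (lk - 1) := Nat.pow_pos (by norm_num)
    have hnk_le : nk ≤ 2 ^ (lk - 1) * nk := Nat.le_mul_of_pos_left _ hpos
    have hnk_lt : nk < 2 ^ (n + 1) := by omega
    have hun : u ≤ n := by
      have h2 : 2 ^ u < 2 ^ (n + 1) := lt_of_lt_of_le hbig hnk_lt.le
      have := (Nat.pow_lt_pow_iff_right (by norm_num : 1 < 2)).mp h2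
      omega
    have hlk_le : lk + u ≤ n + 1 := by
      have h1 : 2 ^ (lk - 1 + u) < 2 ^ (lk - 1) * nk := by
        rw [pow_add]; exact Nat.mul_lt_mul_of_le_of_lt (le_refl _) hbig hpos
      have h2 : 2 ^ (lk - 1 + u) < 2 ^ (n + 1) := by omega
      have := (Nat.pow_lt_pow_iff_right (by norm_num : 1 < 2)).mp h2
      omega
    by_cases h' : lk' ≤ u
    · exact Or.inr (by omega)
    · exfalso
      push_neg at h'
      have hmono : 2 ^ u * nk' ≤ 2 ^ (lk' - 1) * nk' :=
        Nat.mul_le_mul_right _ (Nat.pow_le_pow_right (by norm_num) (by omega))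
      have hnk'lt : 2 ^ u * nk' < 2 ^ (n + 1) := by omega
      have heq : 2 ^ u * 2 ^ (n + 1 - u) = 2 ^ (n + 1) := by
        rw [← pow_add]; congr 1; omega
      have hlkeq : lk = n + 1 - u := by omega
      have hbigmul : 2 ^ (n + 1) + 2 ^ (n + 1 - u) ≤ 2 ^ lk * nk := by
        rw [hlkeq]
        calc 2 ^ (n + 1) + 2 ^ (n + 1 - u) = 2 ^ (n + 1 - u) * (2 ^ u + 1) := by
              rw [mul_add, mul_one, mul_comm (2 ^ (n + 1 - u)) (2 ^ u), heq]
          _ ≤ 2 ^ (n + 1 - u) * nk := Nat.mul_le_mul_left _ hbig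
      have hnk'lt2 : nk' < 2 ^ (n + 1 - u) := by
        by_contra hc
        push_neg at hc
        have := Nat.mul_le_mul_left (2 ^ u) hc
        omega
      have hsub : 2 ^ lk * nk - nk' + nk' = 2 ^ lk * nk :=
        Nat.sub_add_cancel (by omega)
      omega
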